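/- arXiv:1107.5980 — 2 statements merged into one kernel-verified Lean document; each statement's English description precedes it below -/
import Mathlib

section
/- Let φ denote either the maximum function max or the minimum function min on nonempty multisets of integers, and let ≿φ and ≻φ denote the corresponding order (≿max, ≻max or ≿min, ≻min). Let H, H', L, L' be nonempty multisets of integers, and for nonempty H and L define H ⊖ L to be the image of L under ℓ ↦ φ(H) − ℓ. If H ≿φ H' and L' ≿dms L, then (H ⊖ L) ≿ms (H' ⊖ L'). If in addition H ≻φ H', or L' ≻dms L, then (H ⊖ L) ≻ms (H' ⊖ L'). -/
/-- The maximum of a multiset of integers (0 for the empty multiset; only used on nonempty ones). -/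
def mmax (S : Multiset ℤ) : ℤ := WithBot.unbotD 0 ((S.map (fun x => (x : WithBot ℤ))).sup)

/-- The minimum of a multiset of integers (0 for the empty multiset; only used on nonempty ones). -/
def mmin (S : Multiset ℤ) : ℤ := WithTop.untopD 0 ((S.map (fun x => (x : WithTop ℤ))).inf)

/-- max order, weak: S ≿max T. -/
def geMax (S T : Multiset ℤ) : Prop := T = 0 ∨ (S ≠ 0 ∧ T ≠ 0 ∧ mmax S ≥ mmax T)

/-- max order, strict: S ≻max T. -/
def gtMax (S T : Multiset ℤ) : Prop := (S ≠ 0 ∧ T ≠ 0 ∧ mmax S > mmax T) ∨ (S ≠ 0 ∧ T = 0)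

/-- min order, weak: S ≿min T. -/
def geMin (S T : Multiset ℤ) : Prop := S = 0 ∨ (S ≠ 0 ∧ T ≠ 0 ∧ mmin S ≥ mmin T)

/-- min order, strict: S ≻min T. -/
def gtMin (S T : Multiset ℤ) : Prop := (S ≠ 0 ∧ T ≠ 0 ∧ mmin S > mmin T) ∨ (S = 0 ∧ T ≠ 0)

/-- multiset order, strict: S ≻ms T. -/
def gtMS (S T : Multiset ℤ) : Prop :=
  ∃ W U V : Multiset ℤ, U ≠ 0 ∧ S = W + U ∧ T = W + V ∧ gtMax U V

/-- multiset order, weak: S ≿ms T. -/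
def geMS (S T : Multiset ℤ) : Prop := gtMS S T ∨ S = T

/-- dual multiset order, strict: S ≻dms T. -/
def gtDMS (S T : Multiset ℤ) : Prop :=
  ∃ W U V : Multiset ℤ, V ≠ 0 ∧ S = W + U ∧ T = W + V ∧ gtMin U V

/-- dual multiset order, weak: S ≿dms T. -/
def geDMS (S T : Multiset ℤ) : Prop := gtDMS S T ∨ S = T

/- ## Auxiliary lemmas -/

lemma mmax_eq' (S : Multiset ℤ) : mmax S = WithBot.unbotD 0 ((S.map WithBot.some).sup) := by
  have h : Multiset.map (fun x => x) (Multiset.bind S (fun a => {WithBot.some a}))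
      = S.map WithBot.some := by rw [Multiset.bind_singleton, Multiset.map_id']
  exact congrArg (fun t => WithBot.unbotD 0 (Multiset.sup t)) h

lemma mmin_eq' (S : Multiset ℤ) : mmin S = WithTop.untopD 0 ((S.map WithTop.some).inf) := by
  have h : Multiset.map (fun x => x) (Multiset.bind S (fun a => {WithTop.some a}))
      = S.map WithTop.some := by rw [Multiset.bind_singleton, Multiset.map_id']
  exact congrArg (fun t => WithTop.untopD 0 (Multiset.inf t)) h

lemma mmax_spec (S : Multiset ℤ) (h : S ≠ 0) : mmax S ∈ S ∧ ∀ x ∈ S, x ≤ mmax S := by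
  suffices h' : ∃ m : ℤ, (S.map WithBot.some).sup = WithBot.some m ∧ m ∈ S ∧ ∀ x ∈ S, x ≤ m by
    obtain ⟨m, hm, hmem, hub⟩ := h'
    have he : mmax S = m := by rw [mmax_eq', hm]; rfl
    rw [he]; exact ⟨hmem, hub⟩
  induction S using Multiset.induction with
  | empty => exact absurd rfl h
  | cons a T ih =>
    by_cases hT : T = 0
    · subst hT
      refine ⟨a, ?_, by simp, by simp⟩
      rw [Multiset.map_cons, Multiset.map_zero, Multiset.sup_cons, Multiset.sup_zero]
      exact sup_bot_eq _
    · obtain ⟨m, hm, hmem, hub⟩ := ih hT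
      refine ⟨a ⊔ m, ?_, ?_, ?_⟩
      · rw [Multiset.map_cons, Multiset.sup_cons, hm]
        exact (WithBot.coe_sup a m).symm
      · rcases le_total a m with h' | h'
        · rw [max_eq_right h']; exact Multiset.mem_cons_of_mem hmem
        · rw [max_eq_left h']; exact Multiset.mem_cons_self a T
      · intro x hx
        rcases Multiset.mem_cons.mp hx with rfl | hx
        · exact le_sup_left
        · exact le_trans (hub x hx) le_sup_right

lemma mmin_spec (S : Multiset ℤ) (h : S ≠ 0) : mmin S ∈ S ∧ ∀ x ∈ S, mmin S ≤ x := by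
  suffices h' : ∃ m : ℤ, (S.map WithTop.some).inf = WithTop.some m ∧ m ∈ S ∧ ∀ x ∈ S, m ≤ x by
    obtain ⟨m, hm, hmem, hub⟩ := h'
    have he : mmin S = m := by rw [mmin_eq', hm]; rfl
    rw [he]; exact ⟨hmem, hub⟩
  induction S using Multiset.induction with
  | empty => exact absurd rfl h
  | cons a T ih =>
    by_cases hT : T = 0
    · subst hT
      refine ⟨a, ?_, by simp, by simp⟩
      rw [Multiset.map_cons, Multiset.map_zero, Multiset.inf_cons, Multiset.inf_zero]
      exact inf_top_eq _
    · obtain ⟨m, hm, hmem, hub⟩ := ih hT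
      refine ⟨a ⊓ m, ?_, ?_, ?_⟩
      · rw [Multiset.map_cons, Multiset.inf_cons, hm]
        exact (WithTop.coe_inf a m).symm
      · rcases le_total a m with h' | h'
        · rw [min_eq_left h']; exact Multiset.mem_cons_self a T
        · rw [min_eq_right h']; exact Multiset.mem_cons_of_mem hmem
      · intro x hx
        rcases Multiset.mem_cons.mp hx with rfl | hx
        · exact inf_le_left
        · exact le_trans inf_le_right (hub x hx)

lemma mmax_map_sub (c : ℤ) (S : Multiset ℤ) (h : S ≠ 0) :
    mmax (S.map (fun l => c - l)) = c - mmin S := by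
  have hS' : S.map (fun l => c - l) ≠ 0 := by simpa [Multiset.map_eq_zero] using h
  obtain ⟨hmem, hub⟩ := mmax_spec _ hS'
  obtain ⟨hmem', hlb⟩ := mmin_spec S h
  apply le_antisymm
  · obtain ⟨l, hl, hle⟩ := Multiset.mem_map.mp hmem
    rw [← hle]
    exact sub_le_sub_left (hlb l hl) c
  · exact hub _ (Multiset.mem_map.mpr ⟨mmin S, hmem', rfl⟩)

lemma mmin_le_of_le {V L : Multiset ℤ} (hVL : V ≤ L) (hV : V ≠ 0) (hL : L ≠ 0) :
    mmin L ≤ mmin V :=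
  (mmin_spec L hL).2 _ (Multiset.mem_of_le hVL (mmin_spec V hV).1)

lemma strict_case_gt {a b : ℤ} (hab : b < a) {L L' : Multiset ℤ} (hL : L ≠ 0) (hL' : L' ≠ 0)
    (hmin : mmin L ≤ mmin L') :
    gtMS (L.map (fun l => a - l)) (L'.map (fun l => b - l)) := by
  refine ⟨0, _, _, ?_, (zero_add _).symm, (zero_add _).symm, ?_⟩
  · simpa [Multiset.map_eq_zero] using hL
  · left
    refine ⟨by simpa [Multiset.map_eq_zero] using hL,
      by simpa [Multiset.map_eq_zero] using hL', ?_⟩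
    rw [mmax_map_sub _ _ hL, mmax_map_sub _ _ hL']
    omega

lemma strict_case_eq (a : ℤ) {L L' : Multiset ℤ} (h : gtDMS L' L) :
    gtMS (L.map (fun l => a - l)) (L'.map (fun l => a - l)) := by
  obtain ⟨W, U, V, hV, hL'eq, hLeq, hUV⟩ := h
  refine ⟨W.map (fun l => a - l), V.map (fun l => a - l), U.map (fun l => a - l),
    by simpa [Multiset.map_eq_zero] using hV,
    by rw [hLeq, Multiset.map_add], by rw [hL'eq, Multiset.map_add], ?_⟩
  rcases hUV with ⟨hU, hV', hlt⟩ | ⟨hU0, hV'⟩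
  · left
    exact ⟨by simpa [Multiset.map_eq_zero] using hV',
      by simpa [Multiset.map_eq_zero] using hU,
      by rw [mmax_map_sub _ _ hV', mmax_map_sub _ _ hU]; omega⟩
  · right
    exact ⟨by simpa [Multiset.map_eq_zero] using hV', by simp [hU0]⟩

lemma mmin_le_of_gtDMS {L L' : Multiset ℤ} (h : gtDMS L' L) (hL : L ≠ 0) (hL' : L' ≠ 0) :
    mmin L ≤ mmin L' := by
  obtain ⟨W, U, V, hV, hL'eq, hLeq, hUV⟩ := h
  have hWL : ∀ x ∈ W, x ∈ L := fun x hx => by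
    rw [hLeq]; exact Multiset.mem_add.mpr (Or.inl hx)
  have key : ∀ x ∈ L', mmin L ≤ x := by
    intro x hx
    rw [hL'eq] at hx
    rcases Multiset.mem_add.mp hx with hx | hx
    · exact (mmin_spec L hL).2 x (hWL x hx)
    · rcases hUV with ⟨hU, hV', hlt⟩ | ⟨hU0, _⟩
      · have h1 : mmin L ≤ mmin V :=
          mmin_le_of_le (by rw [hLeq]; exact Multiset.le_add_left _ _) hV hL
        have h2 : mmin U ≤ x := (mmin_spec U hU).2 x hx
        omega
      · rw [hU0] at hx; exact absurd hx (Multiset.notMem_zero x)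
  exact key _ (mmin_spec L' hL').1

lemma no_gtDMS_self (L : Multiset ℤ) : ¬ gtDMS L L := by
  rintro ⟨W, U, V, hV, h1, h2, hUV⟩
  have hUVeq : U = V := by
    have : W + U = W + V := by rw [← h1, ← h2]
    exact add_left_cancel this
  subst hUVeq
  rcases hUV with ⟨_, _, hlt⟩ | ⟨h0, hne⟩
  · exact lt_irrefl _ hlt
  · exact hV h0

/-- Decreasing difference, where the low sets are of type `dms`, the high sets of
type `max` or `min` (with `φ` the corresponding function), and the difference `H ⊖ L`
is the image of `L` under `ℓ ↦ φ H - ℓ`; the difference has type `ms`. -/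
theorem diff_decreasing_lowDMS (φ : Multiset ℤ → ℤ) (geφ gtφ : Multiset ℤ → Multiset ℤ → Prop)
    (hrel : (φ = mmax ∧ geφ = geMax ∧ gtφ = gtMax) ∨ (φ = mmin ∧ geφ = geMin ∧ gtφ = gtMin))
    (H H' L L' : Multiset ℤ)
    (hH : H ≠ 0) (hH' : H' ≠ 0) (hL : L ≠ 0) (hL' : L' ≠ 0)
    (h1 : geφ H H') (h2 : geDMS L' L) :
    geMS (L.map (fun l => φ H - l)) (L'.map (fun l => φ H' - l)) ∧
    ((gtφ H H' ∨ gtDMS L' L) →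
      gtMS (L.map (fun l => φ H - l)) (L'.map (fun l => φ H' - l))) := by
  have hφ : φ H' ≤ φ H ∧ (gtφ H H' → φ H' < φ H) := by
    rcases hrel with ⟨hφ, hge, hgt⟩ | ⟨hφ, hge, hgt⟩ <;> subst hφ <;> subst hge <;> subst hgt
    · constructor
      · rcases h1 with h | ⟨_, _, h⟩
        · exact absurd h hH'
        · exact h
      · rintro (⟨_, _, h⟩ | ⟨_, h⟩)
        · exact h
        · exact absurd h hH'
    · constructor
      · rcases h1 with h | ⟨_, _, h⟩
        · exact absurd h hH
        · exact h
      · rintro (⟨_, _, h⟩ | ⟨h, _⟩)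
        · exact h
        · exact absurd h hH
  obtain ⟨hab, hstrict⟩ := hφ
  have main : (gtφ H H' ∨ gtDMS L' L) →
      gtMS (L.map (fun l => φ H - l)) (L'.map (fun l => φ H' - l)) := by
    intro h
    rcases h2 with hd | heq
    · rcases eq_or_lt_of_le hab with heq' | hlt
      · rw [← heq']
        exact strict_case_eq _ hd
      · exact strict_case_gt hlt hL hL' (mmin_le_of_gtDMS hd hL hL')
    · subst heq
      rcases h with hgt | hd
      · exact strict_case_gt (hstrict hgt) hL hL (le_refl _)
      · exact absurd hd (no_gtDMS_self _)
  refine ⟨?_, main⟩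
  rcases h2 with hd | heq
  · exact Or.inl (main (Or.inr hd))
  · subst heq
    rcases eq_or_lt_of_le hab with heq' | hlt
    · right; rw [heq']
    · exact Or.inl (strict_case_gt hlt hL hL (le_refl _))
end

section
/- For all multisets S and T of integers: S ≻dms T holds if and only if List.Lex (· > ·) aS aT holds, where aS and aT are the lists of elements of S and T, respectively, sorted in non-decreasing order (so that at the first position where the sorted lists differ, S has the larger element, with the convention that a list is greater than any list of which it is a proper prefix). -/
lemma mmin_def' (S : Multiset ℤ) :
    mmin S = WithTop.untopD 0 ((S.map (fun x : ℤ => (x : WithTop ℤ))).inf) := by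
  unfold mmin
  congr 2
  simp [Multiset.map_id', Bind.bind, Multiset.bind_singleton]

lemma mmin_eq (S : Multiset ℤ) (a : ℤ) (ha : a ∈ S) (h : ∀ x ∈ S, a ≤ x) : mmin S = a := by
  rw [mmin_def']
  have h1 : (S.map (fun x : ℤ => (x : WithTop ℤ))).inf = (a : WithTop ℤ) := by
    apply le_antisymm
    · exact Multiset.inf_le (Multiset.mem_map_of_mem _ ha)
    · refine Multiset.le_inf.2 fun b hb => ?_
      obtain ⟨x, hx, rfl⟩ := Multiset.mem_map.1 hb
      exact_mod_cast h x hx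
  rw [h1]; rfl

lemma head_eq_mmin (u : ℤ) (us : List ℤ) (h : (u :: us).Pairwise (· ≤ ·))
    (U : Multiset ℤ) (hU : U = (u :: us : List ℤ)) : mmin U = u := by
  apply mmin_eq
  · rw [hU]; exact Multiset.mem_coe.2 (List.mem_cons_self)
  · intro x hx
    rw [hU, Multiset.mem_coe, List.mem_cons] at hx
    rcases hx with rfl | hx
    · exact le_rfl
    · exact (List.pairwise_cons.1 h).1 x hx

lemma sort_cons_eq (a : ℤ) (s : Multiset ℤ) :
    Multiset.sort (a ::ₘ s) (· ≤ ·) =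
      List.orderedInsert (· ≤ ·) a (Multiset.sort s (· ≤ ·)) := by
  refine List.Perm.eq_of_pairwise' (Multiset.pairwise_sort _ _)
    ((Multiset.pairwise_sort _ _).orderedInsert a _) ?_
  refine List.Perm.trans ?_ (List.perm_orderedInsert _ a _).symm
  rw [← Multiset.coe_eq_coe]
  simp [← Multiset.cons_coe, Multiset.sort_eq]

lemma lex_orderedInsert (a : ℤ) {l1 l2 : List ℤ} (h : List.Lex (· > ·) l1 l2) :
    List.Lex (· > ·) (List.orderedInsert (· ≤ ·) a l1) (List.orderedInsert (· ≤ ·) a l2) := by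
  induction h with
  | @nil b bs =>
      simp only [List.orderedInsert]
      split_ifs with hab
      · exact List.Lex.cons List.Lex.nil
      · exact List.Lex.rel (by omega)
  | @rel x xs y ys hxy =>
      simp only [List.orderedInsert]
      have hxy' : x > y := hxy
      split_ifs with hax hay hay
      · exact List.Lex.cons (List.Lex.rel hxy)
      · exact List.Lex.rel (show a > y by omega)
      · exact absurd (show a ≤ x by omega) hax
      · exact List.Lex.rel hxy
  | @cons x xs ys hlex ih =>
      simp only [List.orderedInsert]
      split_ifs with hax
      · exact List.Lex.cons (List.Lex.cons hlex)
      · exact List.Lex.cons ih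

lemma sort_nonempty (V : Multiset ℤ) (hV : V ≠ 0) :
    ∃ v vs, Multiset.sort V (· ≤ ·) = v :: vs := by
  cases h : Multiset.sort V (· ≤ ·) with
  | nil =>
      exfalso; apply hV
      have := Multiset.sort_eq V (· ≤ ·)
      rw [h] at this; simpa using this.symm
  | cons v vs => exact ⟨v, vs, rfl⟩

lemma lex_of_gtDMS_aux (W U V : Multiset ℤ) (hV : V ≠ 0) (hgt : gtMin U V) :
    List.Lex (· > ·) (Multiset.sort (W + U) (· ≤ ·)) (Multiset.sort (W + V) (· ≤ ·)) := by
  induction W using Multiset.induction with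
  | empty =>
      simp only [zero_add]
      rcases hgt with ⟨hU, _, hlt⟩ | ⟨hU0, _⟩
      · obtain ⟨u, us, hu⟩ := sort_nonempty U hU
        obtain ⟨v, vs, hv⟩ := sort_nonempty V hV
        have hu' : mmin U = u :=
          head_eq_mmin u us (hu ▸ Multiset.pairwise_sort _ _) U (by rw [← hu, Multiset.sort_eq])
        have hv' : mmin V = v :=
          head_eq_mmin v vs (hv ▸ Multiset.pairwise_sort _ _) V (by rw [← hv, Multiset.sort_eq])
        rw [hu, hv]
        exact List.Lex.rel (by rw [hu', hv'] at hlt; exact hlt)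
      · subst hU0
        obtain ⟨v, vs, hv⟩ := sort_nonempty V hV
        rw [hv, show Multiset.sort (0 : Multiset ℤ) (· ≤ ·) = [] by simp]
        exact List.Lex.nil
  | cons a W ih =>
      rw [Multiset.cons_add, Multiset.cons_add, sort_cons_eq, sort_cons_eq]
      exact lex_orderedInsert a ih

lemma gtDMS_of_lex : ∀ {l1 l2 : List ℤ}, List.Lex (· > ·) l1 l2 →
    l1.Pairwise (· ≤ ·) → l2.Pairwise (· ≤ ·) → gtDMS (↑l1) (↑l2) := by
  intro l1 l2 h
  induction h with
  | @nil b bs =>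
      intro _ _
      exact ⟨0, 0, ↑(b :: bs), by simp, by simp, by simp, Or.inr ⟨rfl, by simp⟩⟩
  | @rel x xs y ys hxy =>
      intro h1 h2
      refine ⟨0, ↑(x :: xs), ↑(y :: ys), by simp, by simp, by simp,
        Or.inl ⟨by simp, by simp, ?_⟩⟩
      rw [head_eq_mmin x xs h1 _ rfl, head_eq_mmin y ys h2 _ rfl]
      exact hxy
  | @cons x xs ys hlex ih =>
      intro h1 h2
      obtain ⟨W, U, V, hV, hS, hT, hgt⟩ :=
        ih (List.pairwise_cons.1 h1).2 (List.pairwise_cons.1 h2).2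
      refine ⟨x ::ₘ W, U, V, hV, ?_, ?_, hgt⟩
      · rw [Multiset.cons_add, ← hS, Multiset.cons_coe]
      · rw [Multiset.cons_add, ← hT, Multiset.cons_coe]


/-- `S ≻dms T` iff the list of elements of `S` sorted in non-decreasing order is
lexicographically greater (w.r.t. `>`, a list being greater than its proper prefixes)
than that of `T`. -/
theorem gtDMS_iff_lex (S T : Multiset ℤ) :
    gtDMS S T ↔
      List.Lex (· > ·) (Multiset.sort S (· ≤ ·)) (Multiset.sort T (· ≤ ·)) := by
  constructor
  · rintro ⟨W, U, V, hV, rfl, rfl, hgt⟩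
    exact lex_of_gtDMS_aux W U V hV hgt
  · intro h
    have := gtDMS_of_lex h (Multiset.pairwise_sort _ _) (Multiset.pairwise_sort _ _)
    rwa [Multiset.sort_eq, Multiset.sort_eq] at this
end
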